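/- With X(a,b,c) := ∑_{n≥0} q^{bn+c}/(1 - q^{5n+a}) - ∑_{n≥0} q^{(5-b)n + (5+c-a-b)}/(1 - q^{5n+5-a}), one has X(4,1,0) = 0 and X(3,2,1) = 0. -/

import Mathlib

open scoped BigOperators

lemma double_summable (q : ℂ) (hq : ‖q‖ < 1) (A B C : ℕ) (hA : 1 ≤ A) (hB : 1 ≤ B) :
    Summable (fun p : ℕ × ℕ => q ^ (B * p.1 + C + p.2 * (5 * p.1 + A))) := by
  apply Summable.of_norm_bounded (g := fun p : ℕ × ℕ => ‖q‖ ^ p.1 * ‖q‖ ^ p.2)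
  · exact (summable_geometric_of_lt_one (norm_nonneg q) hq).mul_of_nonneg
      (summable_geometric_of_lt_one (norm_nonneg q) hq)
      (fun n => pow_nonneg (norm_nonneg q) n) (fun n => pow_nonneg (norm_nonneg q) n)
  · rintro ⟨n, m⟩
    simp only [norm_pow, ← pow_add]
    apply pow_le_pow_of_le_one (norm_nonneg q) hq.le
    have h1 : n ≤ B * n := Nat.le_mul_of_pos_left n hB
    have h2 : m ≤ m * (5 * n + A) := Nat.le_mul_of_pos_right m (by omega)
    omega

lemma single_eq_double (q : ℂ) (hq : ‖q‖ < 1) (A B C : ℕ) (hA : 1 ≤ A) (hB : 1 ≤ B) :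
    ∑' n : ℕ, q ^ (B * n + C) / (1 - q ^ (5 * n + A)) =
      ∑' p : ℕ × ℕ, q ^ (B * p.1 + C + p.2 * (5 * p.1 + A)) := by
  rw [Summable.tsum_prod' (double_summable q hq A B C hA hB) (fun n => (double_summable q hq A B C hA hB).prod_factor n)]
  refine tsum_congr fun n => ?_
  have hx : ‖q ^ (5 * n + A)‖ < 1 := by
    rw [norm_pow]; exact pow_lt_one₀ (norm_nonneg q) hq (by omega)
  calc q ^ (B * n + C) / (1 - q ^ (5 * n + A))
      = q ^ (B * n + C) * ∑' m : ℕ, (q ^ (5 * n + A)) ^ m := by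
        rw [tsum_geometric_of_norm_lt_one hx, div_eq_mul_inv]
    _ = ∑' m : ℕ, q ^ (B * n + C + m * (5 * n + A)) := by
        rw [← tsum_mul_left]
        exact tsum_congr fun m => by rw [← pow_mul', ← pow_add]

lemma sums_eq (q : ℂ) (hq : ‖q‖ < 1) (a b c a' b' c' : ℕ)
    (ha : 1 ≤ a) (hb : 1 ≤ b) (ha' : 1 ≤ a') (hb' : 1 ≤ b')
    (hsym : ∀ n m : ℕ, b * n + c + m * (5 * n + a) = b' * m + c' + n * (5 * m + a')) :
    ∑' n : ℕ, q ^ (b * n + c) / (1 - q ^ (5 * n + a)) =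
      ∑' n : ℕ, q ^ (b' * n + c') / (1 - q ^ (5 * n + a')) := by
  rw [single_eq_double q hq a b c ha hb, single_eq_double q hq a' b' c' ha' hb']
  rw [← (Equiv.prodComm ℕ ℕ).tsum_eq]
  exact tsum_congr fun ⟨n, m⟩ => by simp [hsym m n]

/-- The infinite q-Pochhammer symbol `(a; q)_∞ = ∏_{n ≥ 0} (1 - a qⁿ)`. -/
noncomputable def qPoch (a q : ℂ) : ℂ := ∏' n : ℕ, (1 - a * q ^ n)

/-- The Lambert-type series `X(a,b,c)` of Jin–Liu–Xia. -/
noncomputable def Xs (q : ℂ) (a b c : ℕ) : ℂ :=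
  (∑' n : ℕ, q ^ (b * n + c) / (1 - q ^ (5 * n + a))) -
    ∑' n : ℕ, q ^ ((5 - b) * n + (5 + c - a - b)) / (1 - q ^ (5 * n + (5 - a)))

/-- `X(4,1,0) = 0` and `X(3,2,1) = 0`. -/
theorem stmt9 (q : ℂ) (hq : ‖q‖ < 1) :
    Xs q 4 1 0 = 0 ∧ Xs q 3 2 1 = 0 := by
  constructor
  · rw [Xs, sub_eq_zero]
    exact sums_eq q hq 4 1 0 1 4 0 (by norm_num) (by norm_num) (by norm_num)
      (by norm_num) (fun n m => by ring)
  · rw [Xs, sub_eq_zero]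
    exact sums_eq q hq 3 2 1 2 3 1 (by norm_num) (by norm_num) (by norm_num)
      (by norm_num) (fun n m => by ring)
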